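/- Let G be a Δ-regular graph on n vertices with adjacency matrix A having smallest eigenvalue λₙ < 0. Then the independence number satisfies α(G) ≤ n|λₙ|/(Δ + |λₙ|) (the Hoffman ratio bound). -/

import Mathlib

open Matrix Finset

/-- The independence number of a graph. -/
noncomputable def indepNum {V : Type*} [Fintype V] (G : SimpleGraph V) : ℕ :=
  sSup {n : ℕ | ∃ S : Finset V,
    (∀ u ∈ S, ∀ v ∈ S, ¬ G.Adj u v) ∧ S.card = n}

lemma shift_posSemidef {V : Type*} [Fintype V] [DecidableEq V]
    (A : Matrix V V ℝ) (hA : A.IsHermitian) (lam : ℝ)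
    (h : ∀ i, lam ≤ hA.eigenvalues i) : (A - lam • 1).PosSemidef := by
  have hU : (hA.eigenvectorUnitary : Matrix V V ℝ) *
      star (hA.eigenvectorUnitary : Matrix V V ℝ) = 1 :=
    (Matrix.mem_unitaryGroup_iff).mp (hA.eigenvectorUnitary).2
  have h1 : A - lam • (1 : Matrix V V ℝ) =
      (hA.eigenvectorUnitary : Matrix V V ℝ) *
        diagonal (fun i => hA.eigenvalues i - lam) *
        (hA.eigenvectorUnitary : Matrix V V ℝ)ᴴ := by
    have hD : diagonal (RCLike.ofReal ∘ hA.eigenvalues) - lam • (1 : Matrix V V ℝ) =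
        diagonal (fun i => hA.eigenvalues i - lam) := by
      rw [smul_one_eq_diagonal, ← diagonal_sub]
      rfl
    conv_lhs => rw [hA.spectral_theorem, Unitary.conjStarAlgAut_apply]
    rw [← Matrix.star_eq_conjTranspose, ← hD, Matrix.mul_sub, Matrix.sub_mul,
      Matrix.mul_smul, Matrix.mul_one, Matrix.smul_mul, hU]
  rw [h1]
  exact (posSemidef_diagonal_iff.mpr (fun i => sub_nonneg.mpr (h i))).mul_mul_conjTranspose_same _

set_option maxHeartbeats 1000000 in
/-- the Hoffman ratio bound.  If `G` is `Δ`-regular on `n`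
vertices and `lam` is the smallest adjacency eigenvalue, with `lam < 0`, then
`α(G) ≤ n * |lam| / (Δ + |lam|)`. -/
theorem hoffman_ratio_bound {V : Type*} [Fintype V] [DecidableEq V]
    (G : SimpleGraph V) [DecidableRel G.Adj] (Δ : ℕ)
    (hreg : G.IsRegularOfDegree Δ)
    (hA : (G.adjMatrix ℝ).IsHermitian) (lam : ℝ)
    (hlam : IsLeast (Set.range hA.eigenvalues) lam) (hneg : lam < 0) :
    (indepNum G : ℝ) ≤ (Fintype.card V : ℝ) * |lam| / ((Δ : ℝ) + |lam|) := by
  classical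
  have hden : (0:ℝ) < (Δ : ℝ) + |lam| :=
    add_pos_of_nonneg_of_pos (Nat.cast_nonneg _) (abs_pos.mpr hneg.ne)
  have hmem : indepNum G ∈ {n : ℕ | ∃ S : Finset V,
      (∀ u ∈ S, ∀ v ∈ S, ¬ G.Adj u v) ∧ S.card = n} := by
    apply Nat.sSup_mem
    · exact ⟨0, ∅, by simp⟩
    · exact ⟨Fintype.card V, fun m hm => by
        obtain ⟨S, -, rfl⟩ := hm; exact S.card_le_univ⟩
  obtain ⟨S, hind, hcard⟩ := hmem
  rw [← hcard]
  rcases S.eq_empty_or_nonempty with rfl | hSne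
  · simp only [Finset.card_empty, Nat.cast_zero]
    exact div_nonneg (mul_nonneg (Nat.cast_nonneg _) (abs_nonneg _)) hden.le
  -- nonempty case
  have : Nonempty V := ⟨hSne.choose⟩
  have hn : (0:ℝ) < (Fintype.card V : ℝ) := by positivity
  have hs : (0:ℝ) < (S.card : ℝ) := by
    exact_mod_cast Finset.card_pos.mpr hSne
  set n : ℝ := (Fintype.card V : ℝ) with hn_def
  set s : ℝ := (S.card : ℝ) with hs_def
  set c : ℝ := s / n with hc_def
  have hcn : c * n = s := div_mul_cancel₀ s hn.ne'
  set y : V → ℝ := fun v => if v ∈ S then 1 else 0 with hy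
  set e : V → ℝ := fun _ => 1 with he
  set x : V → ℝ := y - c • e with hx
  have hAe : G.adjMatrix ℝ *ᵥ e = fun _ => (Δ : ℝ) * 1 := by
    funext v
    exact SimpleGraph.adjMatrix_mulVec_const_apply_of_regular hreg
  -- the four quadratic forms
  have hyAy : y ⬝ᵥ (G.adjMatrix ℝ *ᵥ y) = 0 := by
    apply Finset.sum_eq_zero
    intro v _
    by_cases hv : v ∈ S
    · have : ∑ u ∈ G.neighborFinset v, y u = 0 := by
        apply Finset.sum_eq_zero
        intro u hu
        have hadj : G.Adj v u := by
          rwa [SimpleGraph.mem_neighborFinset] at hu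
        have : u ∉ S := fun huS => hind v hv u huS hadj
        simp [hy, this]
      simp [SimpleGraph.adjMatrix_mulVec_apply, this]
    · simp [hy, hv]
  have hye : y ⬝ᵥ e = s := by
    simp [hy, he, dotProduct, hs_def]
  have hey : e ⬝ᵥ y = s := by
    simp [hy, he, dotProduct, hs_def]
  have hee : e ⬝ᵥ e = n := by
    simp [he, dotProduct, hn_def]
  have hyAe : y ⬝ᵥ (G.adjMatrix ℝ *ᵥ e) = (Δ : ℝ) * s := by
    rw [hAe]
    simp [hy, dotProduct, hs_def, mul_comm, Finset.sum_ite_mem]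
  have heAy : e ⬝ᵥ (G.adjMatrix ℝ *ᵥ y) = (Δ : ℝ) * s := by
    rw [Matrix.dotProduct_mulVec, ← Matrix.mulVec_transpose,
      SimpleGraph.transpose_adjMatrix, hAe]
    simp [hy, dotProduct, hs_def, mul_comm, Finset.sum_ite_mem]
  have heAe : e ⬝ᵥ (G.adjMatrix ℝ *ᵥ e) = (Δ : ℝ) * n := by
    rw [hAe]
    simp [he, dotProduct, hn_def, mul_comm]
  have hyy : y ⬝ᵥ y = s := by
    simp [hy, dotProduct, hs_def, ite_and]
  -- PosSemidef inequality
  have hpsd := shift_posSemidef (G.adjMatrix ℝ) hA lam (fun i => hlam.2 ⟨i, rfl⟩)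
  have h0 := hpsd.dotProduct_mulVec_nonneg x
  rw [star_trivial, Matrix.sub_mulVec, Matrix.smul_mulVec, Matrix.one_mulVec,
    dotProduct_sub, dotProduct_smul] at h0
  have hxAx : x ⬝ᵥ (G.adjMatrix ℝ *ᵥ x) =
      (Δ:ℝ) * n * c^2 - 2 * ((Δ:ℝ) * s) * c := by
    rw [hx, Matrix.mulVec_sub, Matrix.mulVec_smul, sub_dotProduct,
      dotProduct_sub, dotProduct_smul, smul_dotProduct,
      dotProduct_sub, dotProduct_smul,
      hyAy, hyAe, heAy, heAe]
    simp only [smul_eq_mul]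
    ring
  have hxx : x ⬝ᵥ x = s - 2 * s * c + n * c^2 := by
    rw [hx, sub_dotProduct, dotProduct_sub, dotProduct_sub,
      dotProduct_smul, smul_dotProduct, smul_dotProduct,
      dotProduct_smul, hyy, hye, hey, hee]
    simp only [smul_eq_mul]
    ring
  rw [hxAx, hxx, smul_eq_mul] at h0
  -- final algebra
  rw [abs_of_neg hneg] at hden ⊢
  rw [le_div_iff₀ hden]
  have hΔ : (0:ℝ) ≤ (Δ:ℝ) := Nat.cast_nonneg _
  have hexp : n * n * ((Δ:ℝ) * n * c ^ 2 - 2 * ((Δ:ℝ) * s) * c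
      - lam * (s - 2 * s * c + n * c ^ 2)) = n * (-(Δ:ℝ)*s^2 - lam*s*(n - s)) := by
    rw [← hcn]; ring
  have h1 : 0 ≤ -(Δ:ℝ)*s^2 - lam*s*(n - s) := by
    have h2 : 0 ≤ n * (-(Δ:ℝ)*s^2 - lam*s*(n - s)) := by
      rw [← hexp]
      exact mul_nonneg (mul_nonneg hn.le hn.le) h0
    have := div_nonneg h2 hn.le
    rwa [mul_div_cancel_left₀ _ hn.ne'] at this
  nlinarith [h1, hs, mul_pos hs hn]
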